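/- arXiv:2004.03218 — 3 statements merged into one kernel-verified Lean document; each statement's English description precedes it below -/
import Mathlib

section
/- Let $G$ be a locally compact second countable group and $H$ a closed subgroup such that the pair $(G,H)$ does not have relative property (T). Then there exists a conditionally negative definite function $\psi:G\to\mathbb R_{\ge0}$, continuous, whose restriction to $H$ is unbounded. -/
open scoped ENNReal

/-- A (strongly continuous) unitary representation `π` of a topological group `G` almost
has invariant vectors if for every compact `Q ⊆ G` and `ε > 0` there is a unit vector
moved by less than `ε` by all elements of `Q`. -/
def AlmostHasInvariantVectors {G : Type*} [Group G] [TopologicalSpace G]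
    {E : Type*} [NormedAddCommGroup E] [InnerProductSpace ℂ E]
    (π : G →* (E ≃ₗᵢ[ℂ] E)) : Prop :=
  ∀ Q : Set G, IsCompact Q → ∀ ε > (0 : ℝ), ∃ ξ : E, ‖ξ‖ = 1 ∧ ∀ g ∈ Q, ‖π g ξ - ξ‖ < ε

/-- The pair `H ⊆ G` has Kazhdan's property (T): every strongly continuous unitary
representation of `G` which almost has invariant vectors has a nonzero `H`-fixed vector. -/
def PairHasPropertyT (G : Type) [Group G] [TopologicalSpace G] (H : Subgroup G) : Prop :=
  ∀ (E : Type) (_ : NormedAddCommGroup E), ∀ (_ : InnerProductSpace ℂ E) (_ : CompleteSpace E)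
    (π : G →* (E ≃ₗᵢ[ℂ] E)), (∀ ξ : E, Continuous fun g => π g ξ) →
    AlmostHasInvariantVectors π → ∃ ξ : E, ξ ≠ 0 ∧ ∀ h ∈ H, π h ξ = ξ

/-- `ψ : G → ℝ` is conditionally negative definite. -/
def IsCondNegDef {G : Type*} [Group G] (ψ : G → ℝ) : Prop :=
  ψ 1 = 0 ∧ (∀ g : G, ψ g⁻¹ = ψ g) ∧
    ∀ (n : ℕ) (g : Fin n → G) (c : Fin n → ℝ), (∑ i, c i) = 0 →
      ∑ i, ∑ j, c i * c j * ψ ((g i)⁻¹ * g j) ≤ 0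

open scoped RealInnerProductSpace

section AuxPropertyT

variable {G : Type*} [Group G] {E : Type*} [NormedAddCommGroup E] [InnerProductSpace ℂ E]

private lemma pi_apply_mul (π : G →* (E ≃ₗᵢ[ℂ] E)) (a b : G) (ξ : E) :
    π a (π b ξ) = π (a * b) ξ := by
  rw [map_mul]; rfl

private lemma pi_one_apply (π : G →* (E ≃ₗᵢ[ℂ] E)) (ξ : E) : π 1 ξ = ξ := by
  rw [map_one]; rfl

private lemma norm_pi_inv (π : G →* (E ≃ₗᵢ[ℂ] E)) (g : G) (ξ : E) :
    ‖π g⁻¹ ξ - ξ‖ = ‖π g ξ - ξ‖ := by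
  have h : π g (π g⁻¹ ξ - ξ) = ξ - π g ξ := by
    rw [map_sub, pi_apply_mul, mul_inv_cancel, pi_one_apply]
  calc ‖π g⁻¹ ξ - ξ‖ = ‖π g (π g⁻¹ ξ - ξ)‖ := ((π g).norm_map _).symm
    _ = ‖ξ - π g ξ‖ := by rw [h]
    _ = ‖π g ξ - ξ‖ := norm_sub_rev _ _

private lemma condneg_aux (π : G →* (E ≃ₗᵢ[ℂ] E)) (ξ : E) {n : ℕ} (g : Fin n → G)
    (c : Fin n → ℝ) (hc : ∑ i, c i = 0) :
    ∑ i, ∑ j, c i * c j * ‖π ((g i)⁻¹ * g j) ξ - ξ‖ ^ 2 ≤ 0 := by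
  letI : InnerProductSpace ℝ E := InnerProductSpace.complexToReal
  set v : Fin n → E := fun i => π (g i) ξ with hv
  have hnorm : ∀ i j, ‖π ((g i)⁻¹ * g j) ξ - ξ‖ = ‖v j - v i‖ := by
    intro i j
    have h : π (g i) (π ((g i)⁻¹ * g j) ξ - ξ) = v j - v i := by
      rw [map_sub, pi_apply_mul, mul_inv_cancel_left]
    calc ‖π ((g i)⁻¹ * g j) ξ - ξ‖ = ‖π (g i) (π ((g i)⁻¹ * g j) ξ - ξ)‖ :=
          ((π (g i)).norm_map _).symm
      _ = ‖v j - v i‖ := by rw [h]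
  have h3 : ∑ i, ∑ j, c i * c j * ⟪v j, v i⟫ = ‖∑ i, c i • v i‖ ^ 2 := by
    have hrow : ∀ i, ∑ j, c i * c j * ⟪v j, v i⟫ = ⟪∑ j, c j • v j, c i • v i⟫ := by
      intro i
      rw [sum_inner]
      refine Finset.sum_congr rfl fun j _ => ?_
      rw [real_inner_smul_left, real_inner_smul_right]; ring
    calc ∑ i, ∑ j, c i * c j * ⟪v j, v i⟫ = ∑ i, ⟪∑ j, c j • v j, c i • v i⟫ :=
          Finset.sum_congr rfl fun i _ => hrow i
      _ = ⟪∑ j, c j • v j, ∑ i, c i • v i⟫ := (inner_sum _ _ _).symm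
      _ = ‖∑ i, c i • v i‖ ^ 2 := real_inner_self_eq_norm_sq _
  have expand : ∀ i j : Fin n, c i * c j * ‖π ((g i)⁻¹ * g j) ξ - ξ‖ ^ 2
      = c i * (c j * ‖v j‖ ^ 2) + (c i * ‖v i‖ ^ 2) * c j
        - 2 * (c i * c j * ⟪v j, v i⟫) := by
    intro i j
    rw [hnorm i j, norm_sub_sq_real]
    ring
  have key : ∑ i, ∑ j, c i * c j * ‖π ((g i)⁻¹ * g j) ξ - ξ‖ ^ 2
      = -(2 * ‖∑ i, c i • v i‖ ^ 2) := by
    simp only [expand, Finset.sum_sub_distrib, Finset.sum_add_distrib, ← Finset.mul_sum]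
    rw [h3]
    have e1 : ∑ x : Fin n, c x * (∑ i : Fin n, c i * ‖v i‖ ^ 2) = 0 := by
      rw [← Finset.sum_mul, hc, zero_mul]
    have e2 : ∑ x : Fin n, c x * ‖v x‖ ^ 2 * (∑ i : Fin n, c i) = 0 := by
      rw [hc]; simp
    rw [e1, e2]; ring
  rw [key]
  have : (0:ℝ) ≤ 2 * ‖∑ i, c i • v i‖ ^ 2 := by positivity
  linarith

private lemma exists_fixed_vector [CompleteSpace E] (H : Subgroup G) (π : G →* (E ≃ₗᵢ[ℂ] E))
    (ξ : E) (hξ : ‖ξ‖ = 1) (hb : ∀ h ∈ H, ‖π h ξ - ξ‖ ≤ 2⁻¹) :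
    ∃ m : E, m ≠ 0 ∧ ∀ h ∈ H, π h m = m := by
  letI : InnerProductSpace ℝ E := InnerProductSpace.complexToReal
  set S : Set E := (fun g : G => π g ξ) '' (H : Set G) with hS
  have hSball : S ⊆ Metric.closedBall ξ 2⁻¹ := by
    rintro x ⟨h, hh, rfl⟩
    simpa [Metric.mem_closedBall, dist_eq_norm] using hb h hh
  set K : Set E := closure (convexHull ℝ S) with hK
  have hKball : K ⊆ Metric.closedBall ξ 2⁻¹ :=
    closure_minimal (convexHull_min hSball (convex_closedBall _ _))
      Metric.isClosed_closedBall
  have hKconv : Convex ℝ K := (convex_convexHull ℝ S).closure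
  have hξS : ξ ∈ S := ⟨1, H.one_mem, by show π 1 ξ = ξ; rw [map_one]; rfl⟩
  have hKne : K.Nonempty := ⟨ξ, subset_closure (subset_convexHull ℝ S hξS)⟩
  obtain ⟨m, hmK, hm⟩ :=
    exists_norm_eq_iInf_of_complete_convex hKne isClosed_closure.isComplete hKconv 0
  have hmap : ∀ h ∈ H, ∀ x ∈ K, π h x ∈ K := by
    intro h hh
    have hcont : Continuous fun x : E => π h x := (π h).continuous
    have hpreconv : Convex ℝ ((fun x : E => π h x) ⁻¹' K) :=
      hKconv.linear_preimage (((π h).toLinearEquiv.toLinearMap).restrictScalars ℝ)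
    have hSsub : S ⊆ (fun x : E => π h x) ⁻¹' K := by
      rintro x ⟨g, hg, rfl⟩
      refine subset_closure (subset_convexHull ℝ S ?_)
      exact ⟨h * g, H.mul_mem hh hg, (pi_apply_mul π h g ξ).symm⟩
    have : K ⊆ (fun x : E => π h x) ⁻¹' K :=
      closure_minimal (convexHull_min hSsub hpreconv)
        (IsClosed.preimage hcont isClosed_closure)
    exact fun x hx => this hx
  haveI : Nonempty K := hKne.to_subtype
  set d : ℝ := ⨅ w : K, ‖(0:E) - w‖ with hd
  have hbdd : BddBelow (Set.range fun w : K => ‖(0:E) - w‖) :=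
    ⟨0, by rintro r ⟨w, rfl⟩; positivity⟩
  have huniq : ∀ v ∈ K, ∀ w ∈ K, ‖v‖ = d → ‖w‖ = d → v = w := by
    intro v hv w hw hvd hwd
    have hmid : (2⁻¹ : ℝ) • v + (2⁻¹ : ℝ) • w ∈ K :=
      hKconv hv hw (by norm_num) (by norm_num) (by norm_num)
    have hdle : d ≤ ‖(2⁻¹ : ℝ) • v + (2⁻¹ : ℝ) • w‖ := by
      calc d ≤ ‖(0:E) - ((2⁻¹ : ℝ) • v + (2⁻¹ : ℝ) • w)‖ := ciInf_le hbdd ⟨_, hmid⟩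
        _ = ‖(2⁻¹ : ℝ) • v + (2⁻¹ : ℝ) • w‖ := by rw [zero_sub, norm_neg]
    have hpar := parallelogram_law_with_norm ℝ v w
    have hnm : ‖(2⁻¹ : ℝ) • v + (2⁻¹ : ℝ) • w‖ = 2⁻¹ * ‖v + w‖ := by
      rw [← smul_add, norm_smul]
      simp
    have hd0 : 0 ≤ d := le_ciInf fun w => by positivity
    have h4 : 2 * d ≤ ‖v + w‖ := by
      rw [hnm] at hdle; linarith
    have h5 : ‖v - w‖ ^ 2 ≤ 0 := by
      nlinarith [norm_nonneg (v + w), norm_nonneg (v - w)]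
    have : ‖v - w‖ = 0 := by nlinarith [norm_nonneg (v - w)]
    exact norm_sub_eq_zero_iff.mp this
  have hmd : ‖m‖ = d := by rw [← hm, zero_sub, norm_neg]
  have hfix : ∀ h ∈ H, π h m = m := by
    intro h hh
    have h1 : π h m ∈ K := hmap h hh m hmK
    have h2 : ‖π h m‖ = d := by rw [(π h).norm_map]; exact hmd
    exact huniq _ h1 _ hmK h2 hmd
  refine ⟨m, ?_, hfix⟩
  have hdist : ‖m - ξ‖ ≤ 2⁻¹ := by
    have := hKball hmK
    simpa [Metric.mem_closedBall, dist_eq_norm] using this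
  have hlow : (2⁻¹ : ℝ) ≤ ‖m‖ := by
    have h := norm_sub_norm_le ξ m
    have h' : ‖ξ - m‖ = ‖m - ξ‖ := norm_sub_rev _ _
    rw [hξ, h'] at h
    linarith
  intro h0
  rw [h0, norm_zero] at hlow
  norm_num at hlow

end AuxPropertyT

/-- If a pair `H ⊆ G` of a locally compact second countable group and a closed subgroup
does not have property (T), then there is a continuous, nonnegative, conditionally
negative definite function `ψ : G → ℝ` whose restriction to `H` is unbounded. -/
theorem exists_condNegDef_unbounded_of_not_propertyT
    (G : Type) [Group G] [TopologicalSpace G] [IsTopologicalGroup G]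
    [LocallyCompactSpace G] [SecondCountableTopology G]
    (H : Subgroup G) (hH : IsClosed (H : Set G))
    (hT : ¬ PairHasPropertyT G H) :
    ∃ ψ : G → ℝ, Continuous ψ ∧ (∀ g, 0 ≤ ψ g) ∧ IsCondNegDef ψ ∧
      ¬ BddAbove (ψ '' (H : Set G)) := by
  unfold PairHasPropertyT at hT
  push_neg at hT
  obtain ⟨E, i1, i2, i3, π, hcont, haiv, hfix⟩ := hT
  letI := i1; letI := i2; letI := i3
  -- Key: almost invariant vectors can be chosen far from being `H`-invariant.
  have key : ∀ Q : Set G, IsCompact Q → ∀ ε : ℝ, 0 < ε → ∃ ξ : E, ‖ξ‖ = 1 ∧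
      (∀ g ∈ Q, ‖π g ξ - ξ‖ < ε) ∧ ∃ h ∈ H, 2⁻¹ < ‖π h ξ - ξ‖ := by
    intro Q hQ ε hε
    by_contra hcon
    push_neg at hcon
    obtain ⟨ξ, hξ1, hξ2⟩ := haiv Q hQ ε hε
    obtain ⟨m, hm0, hmfix⟩ := exists_fixed_vector H π ξ hξ1 (hcon ξ hξ1 hξ2)
    obtain ⟨h, hh, hne⟩ := hfix m hm0
    exact hne (hmfix h hh)
  -- compact exhaustion
  let Q : CompactExhaustion G := CompactExhaustion.choice G
  set ε : ℕ → ℝ := fun n => min 1 ((4⁻¹ : ℝ) ^ n / (n + 1)) with hε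
  have hεpos : ∀ n, 0 < ε n := fun n => lt_min one_pos (by positivity)
  have hεle1 : ∀ n, ε n ≤ 1 := fun n => min_le_left _ _
  have hεle : ∀ n : ℕ, ε n * (n + 1 : ℝ) ≤ (4⁻¹ : ℝ) ^ n := by
    intro n
    have h1 : ε n ≤ (4⁻¹ : ℝ) ^ n / (n + 1) := min_le_right _ _
    have h2 : (0:ℝ) < (n + 1 : ℝ) := by positivity
    exact (le_div_iff₀ h2).mp h1
  have hchoice : ∀ n : ℕ, ∃ ξ : E, ‖ξ‖ = 1 ∧ (∀ g ∈ Q n, ‖π g ξ - ξ‖ < ε n) ∧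
      ∃ h ∈ H, 2⁻¹ < ‖π h ξ - ξ‖ :=
    fun n => key (Q n) (Q.isCompact n) (ε n) (hεpos n)
  choose ξ hξ1 hξ2 hξ3 using hchoice
  set F : ℕ → G → ℝ := fun n g => ((n : ℝ) + 1) * ‖π g (ξ n) - ξ n‖ ^ 2 with hF
  have hF0 : ∀ n g, 0 ≤ F n g := by
    intro n g
    show (0:ℝ) ≤ ((n : ℝ) + 1) * ‖π g (ξ n) - ξ n‖ ^ 2
    positivity
  have hFglob : ∀ n g, F n g ≤ ((n : ℝ) + 1) * 4 := by
    intro n g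
    have h1 : ‖π g (ξ n) - ξ n‖ ≤ 2 := by
      calc ‖π g (ξ n) - ξ n‖ ≤ ‖π g (ξ n)‖ + ‖ξ n‖ := norm_sub_le _ _
        _ = 2 := by rw [(π g).norm_map, hξ1 n]; norm_num
    have h2 : (0:ℝ) ≤ ‖π g (ξ n) - ξ n‖ := norm_nonneg _
    show ((n : ℝ) + 1) * ‖π g (ξ n) - ξ n‖ ^ 2 ≤ ((n : ℝ) + 1) * 4
    have h3 : ‖π g (ξ n) - ξ n‖ ^ 2 ≤ 4 := by nlinarith
    nlinarith [Nat.cast_nonneg (α := ℝ) n]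
  have hFQ : ∀ n : ℕ, ∀ g ∈ Q n, F n g ≤ (4⁻¹ : ℝ) ^ n := by
    intro n g hg
    have h1 : ‖π g (ξ n) - ξ n‖ < ε n := hξ2 n g hg
    have h2 : ‖π g (ξ n) - ξ n‖ ^ 2 ≤ ε n ^ 2 :=
      pow_le_pow_left₀ (norm_nonneg _) h1.le 2
    have h3 : ε n ^ 2 ≤ ε n := by nlinarith [hεpos n, hεle1 n]
    have h4 : (0:ℝ) ≤ (n : ℝ) + 1 := by positivity
    calc F n g ≤ ((n : ℝ) + 1) * ε n := by
          show ((n : ℝ) + 1) * ‖π g (ξ n) - ξ n‖ ^ 2 ≤ ((n : ℝ) + 1) * ε n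
          nlinarith
      _ = ε n * ((n : ℝ) + 1) := mul_comm _ _
      _ ≤ (4⁻¹ : ℝ) ^ n := hεle n
  set C : ℕ → ℝ := fun m => (4 : ℝ) ^ (m + 1) * (m + 1) with hC
  have hdom : ∀ m : ℕ, ∀ g ∈ Q m, ∀ n : ℕ, F n g ≤ C m * (4⁻¹ : ℝ) ^ n := by
    intro m g hg n
    rcases le_or_gt m n with hmn | hnm
    · have h1 : F n g ≤ (4⁻¹ : ℝ) ^ n := hFQ n g (Q.subset hmn hg)
      have h2 : (1:ℝ) ≤ C m := by
        show (1:ℝ) ≤ (4 : ℝ) ^ (m + 1) * (m + 1)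
        have ha : (1:ℝ) ≤ (4:ℝ) ^ (m + 1) := one_le_pow₀ (by norm_num)
        have hb : (1:ℝ) ≤ (m : ℝ) + 1 := by
          have := Nat.cast_nonneg (α := ℝ) m; linarith
        nlinarith
      have h3 : (0:ℝ) < (4⁻¹ : ℝ) ^ n := by positivity
      nlinarith
    · -- n < m
      have h1 : F n g ≤ ((n : ℝ) + 1) * 4 := hFglob n g
      have hpow : (4:ℝ) ^ n ≤ (4:ℝ) ^ m := pow_le_pow_right₀ (by norm_num) hnm.le
      have hprod : (4:ℝ) ^ n * (4⁻¹:ℝ) ^ n = 1 := by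
        rw [← mul_pow]; norm_num
      have hps : (4:ℝ) ^ (m+1) = 4 * (4:ℝ) ^ m := by rw [pow_succ]; ring
      have hqpos : (0:ℝ) < (4⁻¹ : ℝ) ^ n := by positivity
      have h2 : (4:ℝ) ≤ (4:ℝ) ^ (m + 1) * (4⁻¹:ℝ) ^ n := by nlinarith
      have h4 : ((n:ℝ) + 1) ≤ ((m:ℝ) + 1) := by
        have : (n:ℝ) ≤ (m:ℝ) := by exact_mod_cast hnm.le
        linarith
      have h5 : (0:ℝ) < (m:ℝ) + 1 := by positivity
      have : ((n:ℝ) + 1) * 4 ≤ C m * (4⁻¹:ℝ) ^ n := by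
        show ((n:ℝ) + 1) * 4 ≤ (4 : ℝ) ^ (m + 1) * ((m : ℝ) + 1) * (4⁻¹:ℝ) ^ n
        nlinarith
      linarith
  have hCsum : ∀ m : ℕ, Summable (fun n => C m * (4⁻¹ : ℝ) ^ n) := fun m =>
    (summable_geometric_of_lt_one (by norm_num) (by norm_num)).mul_left _
  have hsum : ∀ g : G, Summable fun n => F n g := by
    intro g
    obtain ⟨m, hm⟩ := Q.exists_mem g
    exact Summable.of_nonneg_of_le (fun n => hF0 n g) (fun n => hdom m g hm n) (hCsum m)
  set ψ : G → ℝ := fun g => ∑' n, F n g with hψ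
  refine ⟨ψ, ?_, ?_, ⟨?_, ?_, ?_⟩, ?_⟩
  · -- continuity
    have hloc : TendstoLocallyUniformly
        (fun N g => ∑ n ∈ Finset.range N, F n g) ψ Filter.atTop := by
      rw [tendstoLocallyUniformly_iff_forall_isCompact]
      intro K hK
      obtain ⟨m, hm⟩ := Q.exists_superset_of_isCompact hK
      refine TendstoUniformlyOn.mono ?_ hm
      exact tendstoUniformlyOn_tsum_nat (hCsum m) fun n g hg => by
        rw [Real.norm_of_nonneg (hF0 n g)]; exact hdom m g hg n
    refine hloc.continuous (Filter.Eventually.of_forall fun N => ?_).frequently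
    refine continuous_finset_sum _ fun n _ => ?_
    exact continuous_const.mul (((hcont (ξ n)).sub continuous_const).norm.pow 2)
  · -- nonnegativity
    intro g; exact tsum_nonneg fun n => hF0 n g
  · -- ψ 1 = 0
    have hz : ∀ n, F n (1 : G) = 0 := by
      intro n
      show ((n : ℝ) + 1) * ‖π 1 (ξ n) - ξ n‖ ^ 2 = 0
      rw [pi_one_apply]
      simp
    show ∑' n, F n (1 : G) = 0
    simp only [hz, tsum_zero]
  · -- symmetry
    intro g
    show ∑' n, F n g⁻¹ = ∑' n, F n g
    refine tsum_congr fun n => ?_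
    show ((n : ℝ) + 1) * ‖π g⁻¹ (ξ n) - ξ n‖ ^ 2 = ((n : ℝ) + 1) * ‖π g (ξ n) - ξ n‖ ^ 2
    rw [norm_pi_inv]
  · -- conditional negativity
    intro k g c hc
    have hsum2 : ∀ i : Fin k, ∀ j : Fin k,
        Summable fun n => c i * c j * F n ((g i)⁻¹ * g j) := fun i j =>
      (hsum _).mul_left _
    have hsum3 : ∀ i : Fin k, Summable fun n => ∑ j, c i * c j * F n ((g i)⁻¹ * g j) :=
      fun i => summable_sum fun j _ => hsum2 i j
    have swap : ∑ i, ∑ j, c i * c j * ψ ((g i)⁻¹ * g j)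
        = ∑' n, ∑ i, ∑ j, c i * c j * F n ((g i)⁻¹ * g j) := by
      show ∑ i, ∑ j, c i * c j * (∑' n, F n ((g i)⁻¹ * g j)) = _
      have step1 : ∀ i : Fin k, ∑ j, c i * c j * (∑' n, F n ((g i)⁻¹ * g j))
          = ∑' n, ∑ j, c i * c j * F n ((g i)⁻¹ * g j) := by
        intro i
        rw [Summable.tsum_finsetSum fun j _ => hsum2 i j]
        exact Finset.sum_congr rfl fun j _ => Eq.symm tsum_mul_left
      calc ∑ i, ∑ j, c i * c j * (∑' n, F n ((g i)⁻¹ * g j))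
          = ∑ i, ∑' n, ∑ j, c i * c j * F n ((g i)⁻¹ * g j) :=
            Finset.sum_congr rfl fun i _ => step1 i
        _ = ∑' n, ∑ i, ∑ j, c i * c j * F n ((g i)⁻¹ * g j) :=
            (Summable.tsum_finsetSum fun i _ => hsum3 i).symm
    rw [swap]
    refine tsum_nonpos fun n => ?_
    have e : ∑ i, ∑ j, c i * c j * F n ((g i)⁻¹ * g j)
        = ((n:ℝ) + 1) * ∑ i, ∑ j, c i * c j * ‖π ((g i)⁻¹ * g j) (ξ n) - ξ n‖ ^ 2 := by
      rw [Finset.mul_sum]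
      refine Finset.sum_congr rfl fun i _ => ?_
      rw [Finset.mul_sum]
      refine Finset.sum_congr rfl fun j _ => ?_
      show c i * c j * (((n : ℝ) + 1) * ‖π ((g i)⁻¹ * g j) (ξ n) - ξ n‖ ^ 2) = _
      ring
    rw [e]
    have hcn := condneg_aux π (ξ n) g c hc
    have hnn : (0:ℝ) ≤ (n:ℝ) + 1 := by positivity
    exact mul_nonpos_iff.mpr (Or.inl ⟨hnn, hcn⟩)
  · -- unbounded on H
    rintro ⟨b, hb⟩
    obtain ⟨n, hn⟩ := exists_nat_gt (4 * b)
    obtain ⟨h, hh, hhn⟩ := hξ3 n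
    have h1 : ((n:ℝ) + 1) * 4⁻¹ ≤ F n h := by
      show ((n:ℝ) + 1) * 4⁻¹ ≤ ((n : ℝ) + 1) * ‖π h (ξ n) - ξ n‖ ^ 2
      have hx0 := norm_nonneg (π h (ξ n) - ξ n)
      nlinarith [Nat.cast_nonneg (α := ℝ) n,
        mul_nonneg (sub_nonneg.mpr hhn.le)
          (show (0:ℝ) ≤ ‖π h (ξ n) - ξ n‖ + 2⁻¹ by linarith)]
    have h2 : F n h ≤ ψ h :=
      Summable.le_tsum (hsum h) n fun m _ => hF0 m h
    have h3 : ψ h ≤ b := hb ⟨h, hh, rfl⟩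
    have : (4:ℝ) * b < (n:ℝ) := by exact_mod_cast hn
    nlinarith
end

section
/- Let $(X,\mathcal C,\mu)$ be a measure space with a measure-preserving $G$-action and $H\subset G$ a subgroup. Let $\mathcal R$ be a collection of measurable sets closed under finite unions such that: for all $C,D\in\mathcal R$ and $\varepsilon>0$ there is $h\in H$ with $\mu(hC\cap D)<\varepsilon$. Suppose every finite-measure set $A\in\mathcal C$ can, for each $\varepsilon>0$, be covered by countably many sets from $\mathcal R$ of total measure at most $\mu(A)+\varepsilon$. Then for all finite-measure $A,B\in\mathcal C$ and every $\varepsilon>0$ there exists $h\in H$ with $\mu(hA\cap B)<\varepsilon$. -/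
open MeasureTheory Pointwise ENNReal

/-- Covering lemma for the weak `C₀` property: let `G` act measure-preservingly on
`(X, 𝒞, μ)`, `H ≤ G`, and let `ℛ` be a collection of measurable sets closed under finite
unions such that for all `C, D ∈ ℛ` and `ε > 0` there is `h ∈ H` with `μ(h C ∩ D) < ε`.
If every finite-measure measurable set can, for each `ε > 0`, be covered by countably many
sets of `ℛ` of total measure at most `μ(A) + ε`, then for all finite-measure measurable
`A, B` and every `ε > 0` there is `h ∈ H` with `μ(h A ∩ B) < ε`. -/
theorem weaklyC0_of_generating_collection
    {G X : Type*} [Group G] [MulAction G X] [MeasurableSpace X]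
    (μ : Measure X) (hμ : ∀ g : G, MeasurePreserving (fun x => g • x) μ μ)
    (H : Subgroup G) (R : Set (Set X))
    (hmeas : ∀ C ∈ R, MeasurableSet C)
    (hunion : ∀ C ∈ R, ∀ D ∈ R, C ∪ D ∈ R)
    (hR : ∀ C ∈ R, ∀ D ∈ R, ∀ ε : ℝ≥0∞, 0 < ε → ∃ h ∈ H, μ (h • C ∩ D) < ε)
    (hcover : ∀ A : Set X, MeasurableSet A → μ A ≠ ∞ → ∀ ε : ℝ≥0∞, 0 < ε →
      ∃ C : ℕ → Set X, (∀ n, C n ∈ R) ∧ A ⊆ ⋃ n, C n ∧ ∑' n, μ (C n) ≤ μ A + ε) :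
    ∀ A B : Set X, MeasurableSet A → MeasurableSet B → μ A ≠ ∞ → μ B ≠ ∞ →
      ∀ ε : ℝ≥0∞, 0 < ε → ∃ h ∈ H, μ (h • A ∩ B) < ε := by
  intro A B hA hB hAfin hBfin ε hε
  set δ : ℝ≥0∞ := min ε 1 with hδdef
  have hδpos : 0 < δ := lt_min hε one_pos
  have hδtop : δ ≠ ∞ := ne_top_of_le_ne_top one_ne_top (min_le_right _ _)
  have hδε : δ ≤ ε := min_le_left _ _
  have hδ4pos : 0 < δ / 4 := ENNReal.div_pos hδpos.ne' (by norm_num)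
  -- covers
  obtain ⟨C, hCR, hAC, hCsum⟩ := hcover A hA hAfin 1 one_pos
  obtain ⟨D, hDR, hBD, hDsum⟩ := hcover B hB hBfin 1 one_pos
  have hCfin : ∑' n, μ (C n) ≠ ∞ :=
    ne_top_of_le_ne_top (by simp [hAfin]) hCsum
  have hDfin : ∑' n, μ (D n) ≠ ∞ :=
    ne_top_of_le_ne_top (by simp [hBfin]) hDsum
  -- tails
  obtain ⟨N, hN⟩ :=
    ((ENNReal.tendsto_sum_nat_add (fun n => μ (C n)) hCfin).eventually
      (gt_mem_nhds hδ4pos)).exists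
  obtain ⟨M, hM⟩ :=
    ((ENNReal.tendsto_sum_nat_add (fun n => μ (D n)) hDfin).eventually
      (gt_mem_nhds hδ4pos)).exists
  -- accumulated finite unions belong to R
  have hacc : ∀ (E : ℕ → Set X), (∀ n, E n ∈ R) → ∀ n, Set.accumulate E n ∈ R := by
    intro E hE n
    induction n with
    | zero => simpa [Set.accumulate_def] using hE 0
    | succ n ih =>
      rw [Set.accumulate_def, Set.biUnion_le_succ, ← Set.accumulate_def]
      exact hunion _ ih _ (hE (n + 1))
  set U := Set.accumulate C N with hUdef
  set V := Set.accumulate D M with hVdef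
  have hUR : U ∈ R := hacc C hCR N
  have hVR : V ∈ R := hacc D hDR M
  have hUmeas : MeasurableSet U :=
    MeasurableSet.biUnion (Set.to_countable _) fun n _ => hmeas _ (hCR n)
  have hVmeas : MeasurableSet V :=
    MeasurableSet.biUnion (Set.to_countable _) fun n _ => hmeas _ (hDR n)
  -- small remainders
  have hrem : ∀ (E : ℕ → Set X) (S : Set X) (n : ℕ), S ⊆ ⋃ k, E k →
      μ (S \ Set.accumulate E n) ≤ ∑' k, μ (E (k + n)) := by
    intro E S n hS
    refine le_trans (measure_mono ?_) (measure_iUnion_le _)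
    intro x hx
    obtain ⟨m, hm⟩ := Set.mem_iUnion.1 (hS hx.1)
    rcases le_or_gt m n with hmn | hmn
    · exact absurd (Set.mem_accumulate.2 ⟨m, hmn, hm⟩) hx.2
    · exact Set.mem_iUnion.2 ⟨m - n, by rwa [Nat.sub_add_cancel hmn.le]⟩
  have hAU : μ (A \ U) < δ / 4 := lt_of_le_of_lt (hrem C A N hAC) hN
  have hBV : μ (B \ V) < δ / 4 := lt_of_le_of_lt (hrem D B M hBD) hM
  -- apply hR
  obtain ⟨h, hH, hhUV⟩ := hR U hUR V hVR (δ / 4) hδ4pos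
  refine ⟨h, hH, ?_⟩
  -- inclusion
  have hincl : h • A ∩ B ⊆ (h • U ∩ V) ∪ (h • (A \ U) ∪ (B \ V)) := by
    rintro x ⟨hxA, hxB⟩
    by_cases hxU : x ∈ h • U
    · by_cases hxV : x ∈ V
      · exact Or.inl ⟨hxU, hxV⟩
      · exact Or.inr (Or.inr ⟨hxB, hxV⟩)
    · obtain ⟨a, haA, rfl⟩ := hxA
      refine Or.inr (Or.inl ⟨a, ⟨haA, fun haU => hxU ?_⟩, rfl⟩)
      exact Set.smul_mem_smul_set haU
  have hsmul_meas : μ (h • (A \ U)) = μ (A \ U) := by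
    have : h • (A \ U) = (fun x => h⁻¹ • x) ⁻¹' (A \ U) := by
      rw [Set.preimage_smul, inv_inv]
    rw [this, (hμ h⁻¹).measure_preimage (hA.diff hUmeas).nullMeasurableSet]
  calc μ (h • A ∩ B) ≤ μ (h • U ∩ V) + (μ (h • (A \ U)) + μ (B \ V)) :=
        le_trans (measure_mono hincl) (le_trans (measure_union_le _ _)
          (add_le_add_right (measure_union_le _ _) _))
    _ = μ (h • U ∩ V) + (μ (A \ U) + μ (B \ V)) := by rw [hsmul_meas]
    _ < δ / 4 + (δ / 4 + δ / 4) :=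
        ENNReal.add_lt_add hhUV (ENNReal.add_lt_add hAU hBV)
    _ ≤ δ := by
        rw [ENNReal.div_add_div_same, ENNReal.div_add_div_same]
        refine ENNReal.div_le_of_le_mul ?_
        calc δ + (δ + δ) = 3 * δ := by ring
          _ ≤ δ * 4 := by rw [mul_comm]; exact mul_le_mul_right (by norm_num) δ
    _ ≤ ε := hδε
end

section
/- Let $\mathcal H$ be a complex Hilbert space with unitary representation $\pi$ of $G$, and suppose $\{\pi(g)\xi_n : g\in G, n\ge1\}$ is total in $\mathcal H$, where $\langle\pi(g)\xi_n|\xi_n\rangle = e^{-\psi(g)/n}$ for a function $\psi:G\to\mathbb R_{\ge0}$, and $\xi_n\perp\pi(g)\xi_m$ whenever $n\ne m$. If there is a sequence $(h_\ell)\subset H\subset G$ with $\min_{g,g'\in F}\psi(gh_\ell g')\to\infty$ for every finite $F\subset G$, then for every $\varepsilon>0$ and every finite family $\eta_1,\ldots,\eta_m$ from the total set, there exists $h\in H$ with $|\langle\pi(h)\eta_j|\eta_k\rangle|<\varepsilon$ for all $j,k$. -/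
/-- Core weak-mixing estimate: let `π` be a unitary representation of `G` on a complex
Hilbert space `ℋ` and `ξ_n` (for `n ≥ 1`, here indexed by `n + 1`) vectors with
`⟨π(g) ξ_n | ξ_n⟩ = e^{-ψ(g)/n}` for a function `ψ : G → ℝ≥0`, and with
`⟨π(g) ξ_n | ξ_m⟩ = 0` for `n ≠ m`, such that `{π(g) ξ_n : g ∈ G, n ≥ 1}` is total in
`ℋ`. If `(h_ℓ) ⊆ H` satisfies `min_{g, g' ∈ F} ψ(g h_ℓ g') → ∞` for every finite
`F ⊆ G`, then for every `ε > 0` and every finite family `η₁, …, η_m` from the total set,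
there is `h ∈ H` with `|⟨π(h) η_j | η_k⟩| < ε` for all `j, k`. -/
theorem gns_restriction_weak_mixing
    {G E : Type*} [Group G] [NormedAddCommGroup E] [InnerProductSpace ℂ E]
    (π : G →* (E ≃ₗᵢ[ℂ] E)) (ψ : G → ℝ) (hψ : ∀ g, 0 ≤ ψ g)
    (ξ : ℕ → E)
    (hdiag : ∀ (g : G) (n : ℕ), (inner ℂ (π g (ξ n)) (ξ n) : ℂ) =
      Real.exp (-ψ g / (n + 1)))
    (horth : ∀ (g : G) (n m : ℕ), n ≠ m → (inner ℂ (π g (ξ n)) (ξ m) : ℂ) = 0)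
    (htotal : Dense ((Submodule.span ℂ {v : E | ∃ (g : G) (n : ℕ), v = π g (ξ n)} :
      Submodule ℂ E) : Set E))
    (H : Subgroup G) (h : ℕ → G) (hhH : ∀ ℓ, h ℓ ∈ H)
    (hmin : ∀ F : Finset G, ∀ C : ℝ, ∃ L : ℕ, ∀ ℓ ≥ L, ∀ g ∈ F, ∀ g' ∈ F,
      C ≤ ψ (g * h ℓ * g')) :
    ∀ ε > (0 : ℝ), ∀ (m : ℕ) (η : Fin m → E),
      (∀ j, ∃ (g : G) (n : ℕ), η j = π g (ξ n)) →
      ∃ h' ∈ H, ∀ j k, ‖(inner ℂ (π h' (η j)) (η k) : ℂ)‖ < ε := by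
  classical
  intro ε hε m η hη
  choose gf nf hη using hη
  set N : ℕ := Finset.univ.sup nf with hN
  set C : ℝ := (N + 1) * (1 - Real.log ε) with hC
  set F : Finset G := Finset.image gf Finset.univ ∪
    Finset.image (fun j => (gf j)⁻¹) Finset.univ with hF
  obtain ⟨L, hL⟩ := hmin F C
  refine ⟨h L, hhH L, ?_⟩
  intro j k
  have hmem₁ : (gf k)⁻¹ ∈ F := by
    simp [hF]
  have hmem₂ : gf j ∈ F := by
    simp [hF]
  have hCψ : C ≤ ψ ((gf k)⁻¹ * h L * gf j) := hL L le_rfl _ hmem₁ _ hmem₂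
  -- rewrite the inner product
  have key : (inner ℂ (π (h L) (η j)) (η k) : ℂ) =
      inner ℂ (π ((gf k)⁻¹ * h L * gf j) (ξ (nf j))) (ξ (nf k)) := by
    rw [hη j, hη k]
    have := LinearIsometryEquiv.inner_map_map (π (gf k)⁻¹)
      (π (h L) (π (gf j) (ξ (nf j)))) (π (gf k) (ξ (nf k)))
    rw [← this]
    congr 1
    · have : ∀ (a b : G) (x : E), π (a * b) x = π a (π b x) := by
        intro a b x; rw [map_mul]; rfl
      rw [this, this]
    · have : π ((gf k)⁻¹ * gf k) (ξ (nf k)) = π (gf k)⁻¹ (π (gf k) (ξ (nf k))) := by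
        rw [map_mul]; rfl
      rw [← this, inv_mul_cancel, map_one]; rfl
  rw [key]
  rcases eq_or_ne (nf j) (nf k) with hnn | hnn
  · rw [hnn, hdiag]
    rw [Complex.norm_real, Real.norm_eq_abs, Real.abs_exp]
    set ψ₀ : ℝ := ψ ((gf k)⁻¹ * h L * gf j)
    have hnN : (nf k : ℝ) + 1 ≤ (N : ℝ) + 1 := by
      have : nf k ≤ N := Finset.le_sup (Finset.mem_univ k)
      push_cast
      exact_mod_cast Nat.succ_le_succ this
    have hpos : (0:ℝ) < (nf k : ℝ) + 1 := by positivity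
    have hposN : (0:ℝ) < (N : ℝ) + 1 := by positivity
    have h1 : -ψ₀ / ((nf k : ℝ) + 1) ≤ -ψ₀ / ((N : ℝ) + 1) := by
      rw [div_le_div_iff₀ hpos hposN]
      nlinarith [hψ ((gf k)⁻¹ * h L * gf j)]
    have h2 : -ψ₀ / ((N : ℝ) + 1) ≤ -(1 - Real.log ε) := by
      rw [div_le_iff₀ hposN] at *
      nlinarith
    calc Real.exp (-ψ₀ / ((nf k : ℝ) + 1))
        ≤ Real.exp (-(1 - Real.log ε)) := Real.exp_le_exp.2 (h1.trans h2)
      _ = Real.exp (Real.log ε) * Real.exp (-1) := by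
          rw [← Real.exp_add]; ring_nf
      _ = ε * Real.exp (-1) := by rw [Real.exp_log hε]
      _ < ε * 1 := by
          have : Real.exp (-1) < 1 := Real.exp_lt_one_iff.2 (by norm_num)
          nlinarith
      _ = ε := mul_one ε
  · rw [horth _ _ _ hnn]
    simpa using hε
end
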